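/- Let Z ~ N(μ, 1) with μ ∈ ℝ, and let F be a distribution function regularly varying with tail index γ on (0,∞) with continuous strictly increasing F. Then X = Q_F(Φ(Z)) has a regularly varying tail with the same index γ: for all y > 0, lim_{x→∞} P(X > xy)/P(X > x) = y^{−γ}. -/

import Mathlib

open MeasureTheory ProbabilityTheory Filter Topology Set

namespace TSGRV

noncomputable def T (t : ℝ) : ℝ := ∫ x in Set.Ioi t, Real.exp (-x^2/2)

lemma expInt : Integrable (fun x : ℝ => Real.exp (-x^2/2)) := by
  have : (fun x : ℝ => Real.exp (-x^2/2)) = fun x : ℝ => Real.exp (-(1/2) * x^2) := by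
    funext x; ring_nf
  rw [this]
  exact integrable_exp_neg_mul_sq (by norm_num)

lemma expIntOn (s : Set ℝ) : IntegrableOn (fun x : ℝ => Real.exp (-x^2/2)) s :=
  expInt.integrableOn

lemma intPos {s : Set ℝ} (hs : MeasurableSet s) (hpos : 0 < volume s) :
    0 < ∫ x in s, Real.exp (-x^2/2) := by
  rw [setIntegral_pos_iff_support_of_nonneg_ae
    (ae_of_all _ (fun x => (Real.exp_pos _).le)) (expIntOn s)]
  have : Function.support (fun x : ℝ => Real.exp (-x^2/2)) = Set.univ := by
    ext x; simp [Function.support, (Real.exp_pos _).ne']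
  rw [this, Set.univ_inter]
  exact hpos

lemma T_pos (t : ℝ) : 0 < T t :=
  intPos measurableSet_Ioi (by simp)

lemma T_split {s t : ℝ} (h : s ≤ t) :
    T s = (∫ x in Set.Ioc s t, Real.exp (-x^2/2)) + T t := by
  rw [T, T, ← setIntegral_union (Set.Ioc_disjoint_Ioi le_rfl) measurableSet_Ioi
    (expIntOn _) (expIntOn _), Set.Ioc_union_Ioi_eq_Ioi h]

lemma T_strictAnti : StrictAnti T := by
  intro s t hst
  rw [T_split hst.le]
  have : 0 < ∫ x in Set.Ioc s t, Real.exp (-x^2/2) := by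
    apply intPos measurableSet_Ioc
    rw [Real.volume_Ioc]
    simp [hst]
  linarith

lemma T_eq (t : ℝ) : T t = T 0 - ∫ x in (0:ℝ)..t, Real.exp (-x^2/2) := by
  rcases le_total (0:ℝ) t with h | h
  · rw [intervalIntegral.integral_of_le h]
    have := T_split h
    rw [this]; ring
  · rw [intervalIntegral.integral_of_ge h]
    have := T_split h
    rw [this]; ring

lemma T_hasDerivAt (t : ℝ) : HasDerivAt T (-(Real.exp (-t^2/2))) t := by
  have h : HasDerivAt (fun u => ∫ x in (0:ℝ)..u, Real.exp (-x^2/2))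
      (Real.exp (-t^2/2)) t := by
    apply intervalIntegral.integral_hasDerivAt_right
    · exact expInt.intervalIntegrable
    · exact expInt.aestronglyMeasurable.stronglyMeasurableAtFilter
    · exact (Real.continuous_exp.comp (by continuity)).continuousAt
  have h2 : HasDerivAt (fun u => T 0 - ∫ x in (0:ℝ)..u, Real.exp (-x^2/2))
      (-(Real.exp (-t^2/2))) t := by
    simpa using (hasDerivAt_const t (T 0)).fun_sub h
  exact h2.congr_of_eventuallyEq (by filter_upwards with u; exact (T_eq u))


-- derivative computations
lemma hd1 (x : ℝ) : HasDerivAt (fun x : ℝ => -Real.exp (-x^2/2))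
    (x * Real.exp (-x^2/2)) x := by
  have h1 : HasDerivAt (fun x : ℝ => -x^2/2) (-x) x := by
    have := ((hasDerivAt_pow 2 x).div_const 2).fun_neg
    convert this using 1
    rfl
    rfl
    · funext y; ring
    · push_cast; ring
  have := (h1.exp).fun_neg
  simpa [mul_comm] using this

lemma hd2 {x : ℝ} (hx : x ≠ 0) :
    HasDerivAt (fun x : ℝ => -((1/x - 1/x^3) * Real.exp (-x^2/2)))
    ((1 - 3/x^4) * Real.exp (-x^2/2)) x := by
  have h1 : HasDerivAt (fun x : ℝ => 1/x - 1/x^3) (-1/x^2 + 3/x^4) x := by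
    have ha : HasDerivAt (fun x : ℝ => 1/x) (-1/x^2) x := by
      have := hasDerivAt_inv hx
      simp only [one_div]
      convert this using 1
      rfl
      field_simp
    have hb : HasDerivAt (fun x : ℝ => 1/x^3) (-3/x^4) x := by
      have h3 : HasDerivAt (fun x : ℝ => x^3) (3*x^2) x := by
        simpa using hasDerivAt_pow 3 x
      have := (h3.fun_inv (pow_ne_zero 3 hx))
      simp only [one_div]
      convert this using 1
      rfl
      rfl
      field_simp
    have := ha.fun_sub hb
    simp only [one_div] at this ⊢
    convert this using 1
    rfl
    rfl
    ring
  have h2 : HasDerivAt (fun x : ℝ => -x^2/2) (-x) x := by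
    have := ((hasDerivAt_pow 2 x).div_const 2).fun_neg
    convert this using 1
    rfl
    rfl
    · funext y; ring
    · push_cast; ring
  have := ((h1.fun_mul h2.exp)).fun_neg
  convert this using 1
  rfl
  rfl
  have hx2 : x^2 ≠ 0 := pow_ne_zero _ hx
  field_simp
  ring

lemma expTends : Tendsto (fun x : ℝ => Real.exp (-x^2/2)) atTop (𝓝 0) := by
  have hg : Tendsto (fun x : ℝ => Real.exp (-x)) atTop (𝓝 0) :=
    Real.tendsto_exp_neg_atTop_nhds_zero
  apply squeeze_zero_norm' ?_ hg
  filter_upwards [eventually_ge_atTop (2:ℝ)] with x hx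
  rw [Real.norm_eq_abs, abs_of_pos (Real.exp_pos _)]
  exact Real.exp_le_exp.2 (by nlinarith)

lemma invTends : Tendsto (fun x : ℝ => 1/x) atTop (𝓝 0) :=
  tendsto_inv_atTop_zero.congr fun x => (one_div x).symm

lemma invcubeTends : Tendsto (fun x : ℝ => 1/x^3) atTop (𝓝 0) := by
  have := (invTends.mul invTends).mul invTends
  rw [show ((0:ℝ)*0*0) = 0 by norm_num] at this
  exact this.congr fun x => by ring

lemma invsqTends : Tendsto (fun x : ℝ => 1/x^2) atTop (𝓝 0) := by
  have := invTends.mul invTends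
  rw [show ((0:ℝ)*0) = 0 by norm_num] at this
  exact this.congr fun x => by ring

lemma I1 {t : ℝ} (ht : 0 < t) :
    ∫ x in Set.Ioi t, x * Real.exp (-x^2/2) = Real.exp (-t^2/2) := by
  have h := integral_Ioi_of_hasDerivAt_of_nonneg' (g := fun x : ℝ => -Real.exp (-x^2/2))
    (g' := fun x => x * Real.exp (-x^2/2)) (a := t) (l := 0)
    (fun x _ => hd1 x)
    (fun x hx => by
      have : 0 < x := ht.trans hx
      positivity)
    (by simpa using expTends.neg)
  rw [h]; ring

lemma I1int {t : ℝ} (ht : 0 < t) :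
    IntegrableOn (fun x => x * Real.exp (-x^2/2)) (Set.Ioi t) :=
  integrableOn_Ioi_deriv_of_nonneg' (fun x _ => hd1 x)
    (fun x hx => by
      have : 0 < x := ht.trans hx
      positivity)
    (l := 0) (by simpa using expTends.neg)

lemma I2 {t : ℝ} (ht : 2 ≤ t) :
    ∫ x in Set.Ioi t, (1 - 3/x^4) * Real.exp (-x^2/2)
      = (1/t - 1/t^3) * Real.exp (-t^2/2) := by
  have ht0 : 0 < t := by linarith
  have hlim : Tendsto (fun x : ℝ => -((1/x - 1/x^3) * Real.exp (-x^2/2))) atTop (𝓝 0) := by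
    have := ((invTends.sub invcubeTends).mul expTends).neg
    simpa using this
  have h := integral_Ioi_of_hasDerivAt_of_nonneg' (g := fun x : ℝ => -((1/x - 1/x^3) * Real.exp (-x^2/2)))
    (g' := fun x => (1 - 3/x^4) * Real.exp (-x^2/2)) (a := t) (l := 0)
    (fun x hx => hd2 (by rintro rfl; simp at hx; linarith))
    (fun x hx => by
      have h2 : (2:ℝ) < x := lt_of_le_of_lt ht hx
      have hx2 : (4:ℝ) ≤ x^2 := by nlinarith
      have hx4 : (16:ℝ) ≤ x^4 := by nlinarith
      have h4 : (3:ℝ)/x^4 ≤ 1 := by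
        rw [div_le_one (by positivity)]
        linarith
      have := Real.exp_pos (-x^2/2)
      nlinarith)
    hlim
  rw [h]; ring

lemma I2int {t : ℝ} (ht : 2 ≤ t) :
    IntegrableOn (fun x => (1 - 3/x^4) * Real.exp (-x^2/2)) (Set.Ioi t) := by
  have hlim : Tendsto (fun x : ℝ => -((1/x - 1/x^3) * Real.exp (-x^2/2))) atTop (𝓝 0) := by
    have := ((invTends.sub invcubeTends).mul expTends).neg
    simpa using this
  exact integrableOn_Ioi_deriv_of_nonneg'
    (fun x hx => hd2 (by rintro rfl; simp at hx; linarith))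
    (fun x hx => by
      have h2 : (2:ℝ) < x := lt_of_le_of_lt ht hx
      have hx2 : (4:ℝ) ≤ x^2 := by nlinarith
      have hx4 : (16:ℝ) ≤ x^4 := by nlinarith
      have h4 : (3:ℝ)/x^4 ≤ 1 := by
        rw [div_le_one (by positivity)]
        linarith
      have := Real.exp_pos (-x^2/2)
      nlinarith)
    hlim

lemma T_upper {t : ℝ} (ht : 0 < t) : T t ≤ Real.exp (-t^2/2) / t := by
  have h1 : T t ≤ ∫ x in Set.Ioi t, (x/t) * Real.exp (-x^2/2) := by
    have hint : IntegrableOn (fun x => t⁻¹ * (x * Real.exp (-x^2/2))) (Set.Ioi t) :=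
      (I1int ht).const_mul t⁻¹
    apply setIntegral_mono_on expInt.integrableOn
      (hint.congr_fun (fun x _ => by ring) measurableSet_Ioi)
      measurableSet_Ioi
    intro x hx
    have hx1 : 1 ≤ x / t := (le_div_iff₀ ht).2 (by simpa using (le_of_lt hx))
    nlinarith [Real.exp_pos (-x^2/2)]
  have h2 : ∫ x in Set.Ioi t, (x/t) * Real.exp (-x^2/2)
      = t⁻¹ * ∫ x in Set.Ioi t, x * Real.exp (-x^2/2) := by
    rw [← integral_const_mul]
    congr 1; funext x; ring
  rw [h2, I1 ht] at h1
  calc T t ≤ t⁻¹ * Real.exp (-t^2/2) := h1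
  _ = Real.exp (-t^2/2) / t := by ring

lemma T_lower {t : ℝ} (ht : 2 ≤ t) :
    (1 - 1/t^2) * (Real.exp (-t^2/2) / t) ≤ T t := by
  have ht0 : 0 < t := by linarith
  have h1 : ∫ x in Set.Ioi t, (1 - 3/x^4) * Real.exp (-x^2/2) ≤ T t := by
    apply setIntegral_mono_on (I2int ht) expInt.integrableOn measurableSet_Ioi
    intro x hx
    have hx0 : (0:ℝ) < x := by have := lt_of_le_of_lt ht hx; linarith
    nlinarith [Real.exp_pos (-x^2/2), div_nonneg (by norm_num : (0:ℝ) ≤ 3) (le_of_lt (pow_pos hx0 4))]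
  rw [I2 ht] at h1
  calc (1 - 1/t^2) * (Real.exp (-t^2/2) / t) = (1/t - 1/t^3) * Real.exp (-t^2/2) := by
        field_simp
  _ ≤ T t := h1



-- Mills ratio, additive (log) form
lemma millsA : Tendsto (fun t : ℝ => Real.log (T t) + t^2/2 + Real.log t) atTop (𝓝 0) := by
  have hlow : Tendsto (fun t : ℝ => Real.log (1 - 1/t^2)) atTop (𝓝 0) := by
    have h1 : Tendsto (fun t : ℝ => 1 - 1/t^2) atTop (𝓝 1) := by
      have := invsqTends
      have h := (tendsto_const_nhds (x := (1:ℝ)) (f := atTop)).sub this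
      simpa using h
    have hc : ContinuousAt Real.log 1 := Real.continuousAt_log one_ne_zero
    have := hc.tendsto.comp h1
    simpa [Function.comp_def] using this
  apply tendsto_of_tendsto_of_tendsto_of_le_of_le' hlow tendsto_const_nhds
  · filter_upwards [eventually_ge_atTop (2:ℝ)] with t ht
    have ht0 : (0:ℝ) < t := by linarith
    have h1 : (0:ℝ) < 1 - 1/t^2 := by
      have : 1/t^2 ≤ 1/4 := by
        apply div_le_div_of_nonneg_left (by norm_num) (by norm_num)
        nlinarith
      linarith
    have hlT : Real.log ((1 - 1/t^2) * (Real.exp (-t^2/2) / t)) ≤ Real.log (T t) :=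
      Real.log_le_log (by positivity) (T_lower ht)
    have heq : Real.log ((1 - 1/t^2) * (Real.exp (-t^2/2) / t))
        = Real.log (1 - 1/t^2) + (-t^2/2) - Real.log t := by
      rw [Real.log_mul h1.ne' (by positivity), Real.log_div (Real.exp_ne_zero _) ht0.ne',
        Real.log_exp]
      ring
    rw [heq] at hlT
    linarith
  · filter_upwards [eventually_ge_atTop (2:ℝ)] with t ht
    have ht0 : (0:ℝ) < t := by linarith
    have hlT : Real.log (T t) ≤ Real.log (Real.exp (-t^2/2) / t) :=
      Real.log_le_log (T_pos t) (T_upper ht0)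
    have heq : Real.log (Real.exp (-t^2/2) / t) = (-t^2/2) - Real.log t := by
      rw [Real.log_div (Real.exp_ne_zero _) ht0.ne', Real.log_exp]
    rw [heq] at hlT
    linarith

lemma logT_hasDerivAt (t : ℝ) :
    HasDerivAt (fun t => Real.log (T t)) (-(Real.exp (-t^2/2)) / T t) t :=
  (T_hasDerivAt t).log (T_pos t).ne'

-- MVT bound
lemma mvt_bound {u v : ℝ} (hu : 0 < u) (huv : u < v) :
    u * (v - u) ≤ |Real.log (T v) - Real.log (T u)| := by
  obtain ⟨c, hc, hceq⟩ := exists_hasDerivAt_eq_slope (fun t => Real.log (T t))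
    (fun t => -(Real.exp (-t^2/2)) / T t) huv
    (fun t _ => (logT_hasDerivAt t).continuousAt.continuousWithinAt)
    (fun t _ => logT_hasDerivAt t)
  have hc0 : 0 < c := hu.trans hc.1
  have hTc : T c ≤ Real.exp (-c^2/2) / c := T_upper hc0
  have hrate : c ≤ Real.exp (-c^2/2) / T c := by
    rw [le_div_iff₀ (T_pos c)]
    calc c * T c ≤ c * (Real.exp (-c^2/2) / c) :=
          mul_le_mul_of_nonneg_left hTc hc0.le
    _ = Real.exp (-c^2/2) := by field_simp
  have hvu : v - u ≠ 0 := sub_ne_zero.mpr (ne_of_gt huv)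
  have h1 : Real.log (T v) - Real.log (T u) = (-(Real.exp (-c^2/2)) / T c) * (v - u) := by
    rw [hceq, div_mul_cancel₀ _ hvu]
  rw [h1, abs_mul, abs_of_pos (by linarith : (0:ℝ) < v - u)]
  apply mul_le_mul_of_nonneg_right _ (by linarith)
  rw [abs_div, abs_neg, abs_of_pos (Real.exp_pos _), abs_of_pos (T_pos c)]
  exact le_trans hc.1.le hrate

lemma mvt_bound' {u v : ℝ} (hu : 0 < u) (hv : 0 < v) :
    min u v * |v - u| ≤ |Real.log (T v) - Real.log (T u)| := by
  rcases lt_trichotomy u v with h | h | h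
  · rw [abs_of_pos (by linarith : (0:ℝ) < v - u)]
    calc min u v * (v - u) ≤ u * (v - u) :=
          mul_le_mul_of_nonneg_right (min_le_left _ _) (by linarith)
    _ ≤ _ := mvt_bound hu h
  · simp [h]
  · rw [show |Real.log (T v) - Real.log (T u)| = |Real.log (T u) - Real.log (T v)| from
      abs_sub_comm _ _, abs_of_neg (by linarith : v - u < 0)]
    calc min u v * -(v - u) ≤ v * (u - v) := by
          have := mul_le_mul_of_nonneg_right (min_le_right u v) (by linarith : (0:ℝ) ≤ u - v)
          linarith [this]
    _ ≤ _ := mvt_bound hv h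


noncomputable def Afun (t : ℝ) : ℝ := Real.log (T t) + t^2/2 + Real.log t

lemma millsA' : Tendsto Afun atTop (𝓝 0) := millsA

lemma logfrac (m : ℝ) :
    Tendsto (fun t : ℝ => Real.log t - Real.log (t - m)) atTop (𝓝 0) := by
  have hm : Tendsto (fun t : ℝ => m / t) atTop (𝓝 0) :=
    Tendsto.div_atTop tendsto_const_nhds tendsto_id
  have h1 : Tendsto (fun t : ℝ => 1 - m / t) atTop (𝓝 1) := by
    have := (tendsto_const_nhds (x := (1:ℝ)) (f := atTop)).sub hm
    simpa using this
  have h2 : Tendsto (fun t : ℝ => Real.log (1 - m / t)) atTop (𝓝 0) := by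
    have := (Real.continuousAt_log one_ne_zero).tendsto.comp h1
    simpa [Function.comp_def] using this
  apply h2.neg.congr' ?_ |>.mono_right (by simp)
  filter_upwards [eventually_gt_atTop (0:ℝ), eventually_gt_atTop m] with t ht0 htm
  have htm2 : t - m ≠ 0 := sub_ne_zero.mpr (ne_of_gt htm)
  rw [show (1 - m/t) = (t - m)/t by field_simp,
    Real.log_div htm2 ht0.ne']
  ring

lemma core {u v : ℝ → ℝ} (hu : Tendsto u atTop atTop) (hv : Tendsto v atTop atTop)
    {L : ℝ} (hL : 0 < L)
    (h : Tendsto (fun x => T (v x) / T (u x)) atTop (𝓝 L)) (m : ℝ) :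
    Tendsto (fun x => T (v x - m) / T (u x - m)) atTop (𝓝 L) := by
  have hlog : Tendsto (fun x => Real.log (T (v x)) - Real.log (T (u x))) atTop
      (𝓝 (Real.log L)) := by
    have := (Real.continuousAt_log hL.ne').tendsto.comp h
    apply this.congr fun x => ?_
    simp only [Function.comp_apply]
    rw [Real.log_div (T_pos _).ne' (T_pos _).ne']
  -- w → 0
  have hminTop : Tendsto (fun x => min (u x) (v x)) atTop atTop := by
    apply tendsto_atTop.2 fun b => ?_
    filter_upwards [hu.eventually_ge_atTop b, hv.eventually_ge_atTop b] with x h1 h2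
    exact le_min h1 h2
  have hw : Tendsto (fun x => v x - u x) atTop (𝓝 0) := by
    set B := |Real.log L| + 1 with hBdef
    have hquot : Tendsto (fun x => B / min (u x) (v x)) atTop (𝓝 0) :=
      Tendsto.div_atTop tendsto_const_nhds hminTop
    apply squeeze_zero_norm' ?_ hquot
    filter_upwards [hminTop.eventually_ge_atTop 1,
      hlog.abs.eventually (gt_mem_nhds (lt_add_one |Real.log L|))] with x hmin hB
    have hminpos : (0:ℝ) < min (u x) (v x) := lt_of_lt_of_le one_pos hmin
    have hu0 : 0 < u x := lt_of_lt_of_le hminpos (min_le_left _ _)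
    have hv0 : 0 < v x := lt_of_lt_of_le hminpos (min_le_right _ _)
    rw [Real.norm_eq_abs, le_div_iff₀ hminpos]
    calc |v x - u x| * min (u x) (v x) = min (u x) (v x) * |v x - u x| := mul_comm _ _
    _ ≤ |Real.log (T (v x)) - Real.log (T (u x))| := mvt_bound' hu0 hv0
    _ ≤ B := hB.le
  -- components
  have hvm : Tendsto (fun x => v x - m) atTop atTop := by
    have := tendsto_atTop_add_const_right atTop (-m) hv
    apply this.congr fun x => by ring
  have hum : Tendsto (fun x => u x - m) atTop atTop := by
    have := tendsto_atTop_add_const_right atTop (-m) hu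
    apply this.congr fun x => by ring
  have hAvm : Tendsto (fun x => Afun (v x - m)) atTop (𝓝 0) := millsA'.comp hvm
  have hAum : Tendsto (fun x => Afun (u x - m)) atTop (𝓝 0) := millsA'.comp hum
  have hAv : Tendsto (fun x => Afun (v x)) atTop (𝓝 0) := millsA'.comp hv
  have hAu : Tendsto (fun x => Afun (u x)) atTop (𝓝 0) := millsA'.comp hu
  have hlogv : Tendsto (fun x => Real.log (v x) - Real.log (v x - m)) atTop (𝓝 0) :=
    (logfrac m).comp hv
  have hlogu : Tendsto (fun x => Real.log (u x) - Real.log (u x - m)) atTop (𝓝 0) :=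
    (logfrac m).comp hu
  have hD : Tendsto (fun x => (Real.log (T (v x)) - Real.log (T (u x)))
      - (Afun (v x) - Afun (u x))) atTop (𝓝 (Real.log L)) := by
    have := hlog.sub (hAv.sub hAu)
    simpa using this
  have hsum := (((hAvm.sub hAum).add (hw.const_mul m)).add (hlogv.sub hlogu)).add hD
  have hval : ((0:ℝ) - 0) + m * 0 + (0 - 0) + Real.log L = Real.log L := by ring
  rw [hval] at hsum
  have hkey : Tendsto (fun x => Real.log (T (v x - m)) - Real.log (T (u x - m))) atTop
      (𝓝 (Real.log L)) := by
    apply hsum.congr fun x => ?_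
    simp only [Afun]
    ring
  have hfin := (Real.continuous_exp.tendsto _).comp hkey
  rw [Real.exp_log hL] at hfin
  apply hfin.congr fun x => ?_
  simp only [Function.comp_apply]
  rw [Real.exp_sub, Real.exp_log (T_pos _), Real.exp_log (T_pos _)]


noncomputable def cG : ℝ := (Real.sqrt (2 * Real.pi))⁻¹

lemma cG_pos : 0 < cG := inv_pos.2 (Real.sqrt_pos.2 (by positivity))

lemma gauss_toReal (s : Set ℝ) :
    ((gaussianReal 0 1) s).toReal = cG * ∫ x in s, Real.exp (-x^2/2) := by
  rw [gaussianReal_apply_eq_integral 0 one_ne_zero s,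
    ENNReal.toReal_ofReal (integral_nonneg fun x => gaussianPDFReal_nonneg 0 1 x)]
  rw [← integral_const_mul]
  apply integral_congr_ae
  filter_upwards with x
  simp only [gaussianPDFReal, cG, NNReal.coe_one, mul_one, sub_zero]

lemma T_continuous : Continuous T := by
  rw [continuous_iff_continuousAt]
  exact fun z => (T_hasDerivAt z).continuousAt

lemma one_sub_Phi (z : ℝ) : 1 - cdf (gaussianReal 0 1) z = cG * T z := by
  have h1 : (gaussianReal 0 1) (Set.Ioi z) = 1 - (gaussianReal 0 1) (Set.Iic z) := by
    rw [← Set.compl_Iic, measure_compl measurableSet_Iic (measure_ne_top _ _), measure_univ]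
  have h2 : ((gaussianReal 0 1) (Set.Ioi z)).toReal
      = 1 - ((gaussianReal 0 1) (Set.Iic z)).toReal := by
    rw [h1, ENNReal.toReal_sub_of_le prob_le_one (by norm_num)]
    simp
  rw [cdf_eq_real, measureReal_def, ← h2, gauss_toReal]
  rfl

lemma Phi_pos (z : ℝ) : 0 < cdf (gaussianReal 0 1) z := by
  rw [cdf_eq_real, measureReal_def, gauss_toReal]
  exact mul_pos cG_pos (intPos measurableSet_Iic (by simp))

lemma Phi_lt_one (z : ℝ) : cdf (gaussianReal 0 1) z < 1 := by
  have h := one_sub_Phi z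
  nlinarith [mul_pos cG_pos (T_pos z)]

lemma Phi_strictMono : StrictMono (fun z => cdf (gaussianReal 0 1) z) := by
  intro a b hab
  have ha := one_sub_Phi a
  have hb := one_sub_Phi b
  have := T_strictAnti hab
  nlinarith [cG_pos]

lemma Phi_continuous : Continuous (fun z => cdf (gaussianReal 0 1) z) := by
  have heq : (fun z => cdf (gaussianReal 0 1) z) = fun z => 1 - cG * T z :=
    funext fun z => by linarith [one_sub_Phi z]
  rw [heq]
  exact continuous_const.sub (continuous_const.mul T_continuous)

lemma existsEqAux {f : ℝ → ℝ} (hc : Continuous f) (h0 : Tendsto f atBot (𝓝 0))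
    (h1 : Tendsto f atTop (𝓝 1)) {p : ℝ} (hp0 : 0 < p) (hp1 : p < 1) :
    ∃ z, f z = p := by
  obtain ⟨a, ha⟩ := (h0.eventually (gt_mem_nhds hp0)).exists
  obtain ⟨b, hb, hab⟩ := ((h1.eventually (lt_mem_nhds hp1)).and (eventually_ge_atTop a)).exists
  obtain ⟨z, _, hz⟩ := intermediate_value_Icc hab hc.continuousOn ⟨ha.le, hb.le⟩
  exact ⟨z, hz⟩

end TSGRV

open TSGRV in
/-- If `Z ~ N(m, 1)` and `F` is a continuous strictly increasing distribution function
regularly varying with tail index `γ`, then `X = Q_F(Φ(Z))` has a regularly varying tail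
with the same index: `P(X > xy)/P(X > x) → y^{−γ}` as `x → ∞`, for every `y > 0`. -/
theorem transformed_shifted_gaussian_regularly_varying
    {Ω : Type*} [MeasurableSpace Ω] (μ : Measure Ω) [IsProbabilityMeasure μ]
    (m : ℝ) (Z : Ω → ℝ) (hZ_meas : Measurable Z)
    (hZ : Measure.map Z μ = gaussianReal m 1)
    (γ : ℝ) (hγ : 0 < γ)
    (F : ℝ → ℝ) (hF_cont : Continuous F) (hF_mono : StrictMono F)
    (hF_bot : Tendsto F atBot (𝓝 0)) (hF_top : Tendsto F atTop (𝓝 1))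
    (hF_lt_one : ∀ x : ℝ, F x < 1)
    (hRV : ∀ y : ℝ, 0 < y →
      Tendsto (fun x : ℝ => (1 - F (x * y)) / (1 - F x)) atTop (𝓝 (y ^ (-γ))))
    (X : Ω → ℝ)
    (hX : ∀ ω, X ω = sInf {z : ℝ | cdf (gaussianReal 0 1) (Z ω) ≤ F z}) :
    ∀ y : ℝ, 0 < y →
      Tendsto (fun x : ℝ =>
          (μ {ω | X ω > x * y}).toReal / (μ {ω | X ω > x}).toReal)
        atTop (𝓝 (y ^ (-γ))) := by
  have F_pos : ∀ x : ℝ, 0 < F x := by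
    intro x
    have h1 : 0 ≤ F (x - 1) := by
      apply le_of_tendsto hF_bot
      filter_upwards [eventually_le_atBot (x-1)] with z hz
      exact hF_mono.monotone hz
    exact lt_of_le_of_lt h1 (hF_mono (by linarith))
  have hbex : ∀ t : ℝ, ∃ z, cdf (gaussianReal 0 1) z = F t := fun t =>
    existsEqAux Phi_continuous (tendsto_cdf_atBot _) (tendsto_cdf_atTop _) (F_pos t) (hF_lt_one t)
  choose b hb using hbex
  have hXval : ∀ ω, F (X ω) = cdf (gaussianReal 0 1) (Z ω) := by
    intro ω
    obtain ⟨x0, hx0⟩ := existsEqAux hF_cont hF_bot hF_top (Phi_pos (Z ω)) (Phi_lt_one (Z ω))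
    have hset : {z : ℝ | cdf (gaussianReal 0 1) (Z ω) ≤ F z} = Set.Ici x0 := by
      ext z
      simp only [Set.mem_setOf_eq, Set.mem_Ici]
      rw [← hx0]
      exact ⟨fun h => hF_mono.le_iff_le.1 h, fun h => hF_mono.monotone h⟩
    rw [hX ω, hset, csInf_Ici, hx0]
  have hsetEq : ∀ t : ℝ, {ω | X ω > t} = Z ⁻¹' (Set.Ioi (b t)) := by
    intro t; ext ω
    simp only [Set.mem_setOf_eq, Set.mem_preimage, Set.mem_Ioi, gt_iff_lt]
    constructor
    · intro h
      have h2 : F t < F (X ω) := hF_mono h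
      rw [hXval ω, ← hb t] at h2
      exact Phi_strictMono.lt_iff_lt.1 h2
    · intro h
      have h2 : cdf (gaussianReal 0 1) (b t) < cdf (gaussianReal 0 1) (Z ω) :=
        Phi_strictMono h
      rw [hb t, ← hXval ω] at h2
      exact hF_mono.lt_iff_lt.1 h2
  have hmeas : ∀ t : ℝ, (μ {ω | X ω > t}).toReal = cG * T (b t - m) := by
    intro t
    rw [hsetEq t, ← Measure.map_apply hZ_meas measurableSet_Ioi, hZ]
    have hshift : gaussianReal m 1 = (gaussianReal 0 1).map (· + m) := by
      rw [gaussianReal_map_add_const, zero_add]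
    rw [hshift, Measure.map_apply (measurable_add_const m) measurableSet_Ioi]
    have hpre : (· + m) ⁻¹' (Set.Ioi (b t)) = Set.Ioi (b t - m) := by
      ext x
      simp [Set.mem_Ioi, sub_lt_iff_lt_add]
    rw [hpre, gauss_toReal]
    rfl
  have hF_eq : ∀ t : ℝ, 1 - F t = cG * T (b t) := fun t => by
    rw [← hb t, one_sub_Phi]
  intro y hy
  have hb_top : Tendsto b atTop atTop := by
    apply tendsto_atTop.2 fun M => ?_
    filter_upwards [hF_top.eventually (lt_mem_nhds (Phi_lt_one M))] with t ht
    have h2 : cdf (gaussianReal 0 1) M < cdf (gaussianReal 0 1) (b t) := by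
      rw [hb t]; exact ht
    exact (Phi_strictMono.lt_iff_lt.1 h2).le
  have hxy : Tendsto (fun x : ℝ => x * y) atTop atTop :=
    Tendsto.atTop_mul_const hy tendsto_id
  have hbv : Tendsto (fun x => b (x * y)) atTop atTop := hb_top.comp hxy
  have hL : 0 < y ^ (-γ) := Real.rpow_pos_of_pos hy _
  have hratio : Tendsto (fun x => T (b (x*y)) / T (b x)) atTop (𝓝 (y ^ (-γ))) := by
    apply (hRV y hy).congr fun x => ?_
    rw [hF_eq, hF_eq, mul_div_mul_left _ _ (ne_of_gt cG_pos)]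
  have hcore := core hb_top hbv hL hratio m
  apply hcore.congr fun x => ?_
  rw [hmeas, hmeas, mul_div_mul_left _ _ (ne_of_gt cG_pos)]
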